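/- For every fixed nonnegative integer k and λ ∈ (0,1), as n → ∞ one has (b_λ^n)^{(k)}(0) ∼ (−λ)^{n−k} (n(1−λ²))^k, i.e. the ratio of the two sides tends to 1. -/

import Mathlib

open Filter Metric Set Topology

noncomputable section BlaschkeAux

namespace BlaschkeAux

/-- The auxiliary family `F_{a,b}(z) = (z-c)^a ((1-cz)⁻¹)^b`. -/
def Fab (c : ℂ) (a b : ℕ) : ℂ → ℂ := fun z => (z - c) ^ a * ((1 - c * z)⁻¹) ^ b

variable {c : ℂ}

lemma one_sub_ne (hc : ‖c‖ < 1) {z : ℂ} (hz : z ∈ ball (0 : ℂ) 1) : 1 - c * z ≠ 0 := by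
  rw [mem_ball_zero_iff] at hz
  intro h
  have h1 : c * z = 1 := by linear_combination -h
  have h2 : ‖c * z‖ < 1 := by
    rw [norm_mul]
    nlinarith [norm_nonneg c, norm_nonneg z]
  rw [h1, norm_one] at h2
  exact absurd h2 (lt_irrefl 1)

lemma contDiffOn_Fab (hc : ‖c‖ < 1) (n : ℕ∞) (a b : ℕ) :
    ContDiffOn ℂ n (Fab c a b) (ball (0 : ℂ) 1) := by
  apply ContDiffOn.mul
  · exact ((contDiff_id.sub contDiff_const).pow a).contDiffOn
  · exact (((contDiff_const.sub (contDiff_const.mul contDiff_id)).contDiffOn.inv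
      (fun z hz => one_sub_ne hc hz)).pow b)

lemma hasDerivAt_Fab (hc : ‖c‖ < 1) (a b : ℕ) {z : ℂ} (hz : z ∈ ball (0 : ℂ) 1) :
    HasDerivAt (Fab c a b)
      ((a : ℂ) * Fab c (a - 1) b z + (b : ℂ) * c * Fab c a (b + 1) z) z := by
  have hu : 1 - c * z ≠ 0 := one_sub_ne hc hz
  have h1 : HasDerivAt (fun w : ℂ => (w - c) ^ a) ((a : ℂ) * (z - c) ^ (a - 1)) z := by
    simpa using ((hasDerivAt_id z).sub_const c).fun_pow a
  have hu' : HasDerivAt (fun w : ℂ => 1 - c * w) (-c) z := by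
    simpa using (hasDerivAt_const z (1 : ℂ)).fun_sub ((hasDerivAt_id z).const_mul c)
  have h2 : HasDerivAt (fun w : ℂ => ((1 - c * w)⁻¹) ^ b)
      ((b : ℂ) * c * ((1 - c * z)⁻¹) ^ (b + 1)) z := by
    have h2' := (hu'.fun_inv hu).fun_pow b
    have hval : (b : ℂ) * ((1 - c * z)⁻¹) ^ (b - 1) * (- -c / (1 - c * z) ^ 2)
        = (b : ℂ) * c * ((1 - c * z)⁻¹) ^ (b + 1) := by
      rcases b with _ | e
      · simp
      · have hv : - -c / (1 - c * z) ^ 2 = c * ((1 - c * z)⁻¹ * (1 - c * z)⁻¹) := by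
          rw [neg_neg, pow_two, div_eq_mul_inv, mul_inv]
        rw [Nat.add_sub_cancel, hv]
        ring
    rw [hval] at h2'
    exact h2'
  have h3 := h1.mul h2
  have hval : (a : ℂ) * (z - c) ^ (a - 1) * ((1 - c * z)⁻¹) ^ b
      + (z - c) ^ a * ((b : ℂ) * c * ((1 - c * z)⁻¹) ^ (b + 1))
      = (a : ℂ) * Fab c (a - 1) b z + (b : ℂ) * c * Fab c a (b + 1) z := by
    simp only [Fab]; ring
  rw [hval] at h3
  exact h3

lemma iteratedDerivWithin_Fab_succ (hc : ‖c‖ < 1) (k a b : ℕ) :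
    iteratedDerivWithin (k + 1) (Fab c a b) (ball (0 : ℂ) 1) 0 =
      (a : ℂ) * iteratedDerivWithin k (Fab c (a - 1) b) (ball (0 : ℂ) 1) 0
      + (b : ℂ) * c * iteratedDerivWithin k (Fab c a (b + 1)) (ball (0 : ℂ) 1) 0 := by
  have hs : UniqueDiffOn ℂ (ball (0 : ℂ) 1) := isOpen_ball.uniqueDiffOn
  have h0 : (0 : ℂ) ∈ ball (0 : ℂ) 1 := mem_ball_self one_pos
  rw [iteratedDerivWithin_succ']
  have hcongr : Set.EqOn (derivWithin (Fab c a b) (ball (0 : ℂ) 1))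
      (fun z => (a : ℂ) * Fab c (a - 1) b z + (b : ℂ) * c * Fab c a (b + 1) z)
      (ball (0 : ℂ) 1) := by
    intro z hz
    rw [derivWithin_of_isOpen isOpen_ball hz]
    exact (hasDerivAt_Fab hc a b hz).deriv
  rw [iteratedDerivWithin_congr hcongr h0]
  rw [show (fun z => (a : ℂ) * Fab c (a - 1) b z + (b : ℂ) * c * Fab c a (b + 1) z)
      = ((fun z => (a : ℂ) * Fab c (a - 1) b z)
        + fun z => ((b : ℂ) * c) * Fab c a (b + 1) z) from rfl]
  rw [iteratedDerivWithin_add (hx := h0) (h := hs)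
      ((contDiffOn_const.mul (contDiffOn_Fab hc k (a - 1) b)).contDiffWithinAt h0)
      ((contDiffOn_const.mul (contDiffOn_Fab hc k a (b + 1))).contDiffWithinAt h0)]
  rw [iteratedDerivWithin_const_mul (hx := h0) (h := hs) _ ((contDiffOn_Fab hc k (a - 1) b).contDiffWithinAt h0),
    iteratedDerivWithin_const_mul (hx := h0) (h := hs) _ ((contDiffOn_Fab hc k a (b + 1)).contDiffWithinAt h0)]

lemma tendsto_cast_sub_div (p : ℕ) :
    Tendsto (fun n : ℕ => ((n - p : ℕ) : ℂ) / (n : ℂ)) atTop (𝓝 1) := by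
  have hr : Tendsto (fun n : ℕ => ((n - p : ℕ) : ℝ) / (n : ℝ)) atTop (𝓝 1) := by
    have h0 : Tendsto (fun n : ℕ => (p : ℝ) / (n : ℝ)) atTop (𝓝 0) :=
      tendsto_const_div_atTop_nhds_zero_nat (p : ℝ)
    have h1 := (tendsto_const_nhds (x := (1 : ℝ)) (f := atTop (α := ℕ))).sub h0
    rw [sub_zero] at h1
    refine h1.congr' ?_
    filter_upwards [eventually_ge_atTop (p + 1)] with n hn
    have hn0 : (n : ℝ) ≠ 0 := Nat.cast_ne_zero.mpr (by omega)
    rw [Nat.cast_sub (by omega), sub_div, div_self hn0]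
  have h2 := (Complex.continuous_ofReal.tendsto 1).comp hr
  refine h2.congr fun n => ?_
  simp [Function.comp, Complex.ofReal_div]

lemma tendsto_cast_add_div (q : ℕ) :
    Tendsto (fun n : ℕ => ((n + q : ℕ) : ℂ) / (n : ℂ)) atTop (𝓝 1) := by
  have hr : Tendsto (fun n : ℕ => ((n + q : ℕ) : ℝ) / (n : ℝ)) atTop (𝓝 1) := by
    have h0 : Tendsto (fun n : ℕ => (q : ℝ) / (n : ℝ)) atTop (𝓝 0) :=
      tendsto_const_div_atTop_nhds_zero_nat (q : ℝ)
    have h1 := (tendsto_const_nhds (x := (1 : ℝ)) (f := atTop (α := ℕ))).add h0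
    rw [add_zero] at h1
    refine h1.congr' ?_
    filter_upwards [eventually_ge_atTop 1] with n hn
    have hn0 : (n : ℝ) ≠ 0 := Nat.cast_ne_zero.mpr (by omega)
    rw [Nat.cast_add, add_div, div_self hn0]
  have h2 := (Complex.continuous_ofReal.tendsto 1).comp hr
  refine h2.congr fun n => ?_
  simp [Function.comp, Complex.ofReal_div]

lemma aux_alg (c n D1 D2 a b w v : ℂ) (hc : c ≠ 0) (hn : n ≠ 0) (h1 : w ≠ 0) (h2 : v ≠ 0) :
    (a * D1 + b * c * D2) / (w * (v * n))
      = a / n * (D1 / (w * v)) + -c ^ 2 * (b / n) * (D2 / ((w * -c) * v)) := by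
  have hd : w * (v * n) ≠ 0 := mul_ne_zero h1 (mul_ne_zero h2 hn)
  have hA : n * (w * v) ≠ 0 := mul_ne_zero hn (mul_ne_zero h1 h2)
  have hC : w * -c * v ≠ 0 :=
    mul_ne_zero (mul_ne_zero h1 (neg_ne_zero.mpr hc)) h2
  have t1 : a / n * (D1 / (w * v)) = (a * D1) / (w * (v * n)) := by
    rw [div_mul_div_comm, div_eq_div_iff hA hd]; ring
  have t2 : -c ^ 2 * (b / n) * (D2 / ((w * -c) * v)) = (b * c * D2) / (w * (v * n)) := by
    rw [← mul_div_assoc, div_eq_div_iff hC hd]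
    field_simp
  rw [t1, t2, add_div]

lemma tendstoA (hc : ‖c‖ < 1) (hc0 : c ≠ 0) (k : ℕ) :
    ∀ p q : ℕ,
    Tendsto (fun n : ℕ => iteratedDerivWithin k (Fab c (n - p) (n + q)) (ball (0 : ℂ) 1) 0
      / ((-c) ^ (n - p - k) * (n : ℂ) ^ k)) atTop (𝓝 ((1 - c ^ 2) ^ k)) := by
  induction k with
  | zero =>
    intro p q
    have hval : ∀ n : ℕ, iteratedDerivWithin 0 (Fab c (n - p) (n + q)) (ball (0 : ℂ) 1) 0
        / ((-c) ^ (n - p - 0) * (n : ℂ) ^ 0) = 1 := by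
      intro n
      rw [iteratedDerivWithin_zero]
      simp only [Fab, zero_sub, mul_zero, sub_zero, inv_one, one_pow, mul_one, pow_zero,
        Nat.sub_zero]
      exact div_self (pow_ne_zero _ (neg_ne_zero.mpr hc0))
    simp only [pow_zero]
    exact Tendsto.congr (fun n => (hval n).symm) tendsto_const_nhds
  | succ k ih =>
    intro p q
    have l1 := (tendsto_cast_sub_div p).mul (ih (p + 1) q)
    have l2 := ((tendsto_const_nhds (x := -(c ^ 2)) (f := atTop (α := ℕ))).mul
      (tendsto_cast_add_div q)).mul (ih p (q + 1))
    have l3 := l1.add l2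
    have hlim : 1 * (1 - c ^ 2) ^ k + -(c ^ 2) * 1 * (1 - c ^ 2) ^ k
        = (1 - c ^ 2) ^ (k + 1) := by
      rw [pow_succ]; ring
    rw [hlim] at l3
    refine l3.congr' ?_
    filter_upwards [eventually_ge_atTop (p + k + 2)] with n hn
    have hnn : (n : ℂ) ≠ 0 := Nat.cast_ne_zero.mpr (by omega)
    have hcc : (-c) ≠ 0 := neg_ne_zero.mpr hc0
    rw [iteratedDerivWithin_Fab_succ hc k (n - p) (n + q),
      show n - p - 1 = n - (p + 1) from by omega,
      show n - (p + 1) - k = n - p - (k + 1) from by omega,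
      show n - p - k = (n - p - (k + 1)) + 1 from by omega,
      pow_succ (-c) (n - p - (k + 1)), pow_succ ((n : ℂ)) k]
    exact (aux_alg c (n : ℂ) _ _ _ _ _ _ hc0 hnn
      (pow_ne_zero _ hcc) (pow_ne_zero _ hnn)).symm

lemma itw_eq (k : ℕ) (f : ℂ → ℂ) :
    iteratedDerivWithin k f (ball (0 : ℂ) 1) 0 = iteratedDeriv k f 0 := by
  rw [iteratedDerivWithin_eq_iteratedFDerivWithin,
    iteratedFDerivWithin_of_isOpen (𝕜 := ℂ) (f := f) k isOpen_ball (mem_ball_self one_pos),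
    ← iteratedDeriv_eq_iteratedFDeriv]

end BlaschkeAux

end BlaschkeAux

open BlaschkeAux in
/-- For fixed `k` and `λ ∈ (0,1)`, as `n → ∞`,
`(b_λ^n)^{(k)}(0) ∼ (−λ)^{n−k} (n(1−λ²))^k`. -/
theorem stmt2 (l : ℝ) (hl : l ∈ Set.Ioo (0 : ℝ) 1) (k : ℕ) :
    Tendsto (fun n : ℕ =>
        iteratedDeriv k (fun z : ℂ => ((z - (l : ℂ)) / (1 - (l : ℂ) * z)) ^ n) 0
          / ((-(l : ℂ)) ^ (n - k) * ((n : ℂ) * (1 - (l : ℂ) ^ 2)) ^ k))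
      atTop (nhds 1) := by
  obtain ⟨hl0, hl1⟩ := hl
  set c : ℂ := (l : ℂ) with hcdef
  have hc : ‖c‖ < 1 := by
    rw [hcdef, Complex.norm_real, Real.norm_eq_abs, abs_of_pos hl0]
    exact hl1
  have hc0 : c ≠ 0 := Complex.ofReal_ne_zero.mpr hl0.ne'
  have h1c : (1 - c ^ 2) ≠ 0 := by
    intro h
    have h2 : c ^ 2 = 1 := by linear_combination -h
    rw [hcdef] at h2
    have h3 : (l : ℝ) ^ 2 = 1 := by exact_mod_cast h2
    nlinarith
  have hmain := (tendstoA hc hc0 k 0 0).div_const ((1 - c ^ 2) ^ k)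
  rw [div_self (pow_ne_zero _ h1c)] at hmain
  refine hmain.congr fun n => ?_
  have hfun : (fun z : ℂ => ((z - c) / (1 - c * z)) ^ n) = Fab c n n := by
    funext z
    simp only [Fab, div_pow, div_eq_mul_inv, mul_pow, inv_pow]
  simp only [Nat.sub_zero, Nat.add_zero]
  rw [itw_eq, hfun, div_div, mul_pow, mul_assoc]
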